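/- Let X ∈ ℝ^{n×p}, λ₂ > 0, Y ∈ ℝ^n, K = I_n − X(X'X + nλ₂I_p)⁻¹X'. For every δ ∈ ℝ^p, with β̂(δ) = (X'X + nλ₂I_p)⁻¹X'(Y − Xδ), one has ‖Y − X(β̂(δ) + δ)‖₂² + nλ₂‖β̂(δ)‖₂² = ‖K^{1/2}(Y − Xδ)‖₂², where K^{1/2} is the positive semidefinite square root of K. -/

import Mathlib

open Matrix

section

open scoped ComplexOrder

/-- The psd square root of a positive semidefinite matrix, as defined in Mathlib of December 2024
(`Matrix.PosSemidef.sqrt`, since removed from Mathlib). -/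
noncomputable def Matrix.PosSemidef.sqrt {n 𝕜 : Type*} [Fintype n] [DecidableEq n] [RCLike 𝕜]
    {A : Matrix n n 𝕜} (hA : A.PosSemidef) : Matrix n n 𝕜 :=
  hA.1.eigenvectorUnitary.1 * diagonal ((↑) ∘ Real.sqrt ∘ hA.1.eigenvalues) *
  (star hA.1.eigenvectorUnitary : Matrix n n 𝕜)

end

lemma quad_form_eq {n m : ℕ} (M : Matrix (Fin m) (Fin n) ℝ) (r : Fin n → ℝ) :
    (M.mulVec r) ⬝ᵥ (M.mulVec r) = r ⬝ᵥ (Mᵀ * M).mulVec r := by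
  rw [← mulVec_mulVec, dotProduct_mulVec, mulVec_transpose, dotProduct_comm]

theorem lava_profile_identity (n p : ℕ) (hn : 0 < n)
    (X : Matrix (Fin n) (Fin p) ℝ) (Y : Fin n → ℝ) (lam2 : ℝ) (hlam2 : 0 < lam2)
    (K : Matrix (Fin n) (Fin n) ℝ)
    (hK : K = 1 - X * (Xᵀ * X + ((n : ℝ) * lam2) • (1 : Matrix (Fin p) (Fin p) ℝ))⁻¹ * Xᵀ)
    (hKpsd : K.PosSemidef) (δ : Fin p → ℝ) :
    let Q : Matrix (Fin p) (Fin p) ℝ := Xᵀ * X + ((n : ℝ) * lam2) • (1 : Matrix (Fin p) (Fin p) ℝ)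
    let βhat : Fin p → ℝ := Q⁻¹.mulVec (Xᵀ.mulVec (Y - X.mulVec δ))
    (∑ i, (Y i - X.mulVec (βhat + δ) i)^2) + (n : ℝ) * lam2 * (∑ j, (βhat j)^2)
      = ∑ i, (hKpsd.sqrt.mulVec (Y - X.mulVec δ) i)^2 := by
  intro Q βhat
  set c : ℝ := (n : ℝ) * lam2 with hc
  have hcpos : 0 < c := by positivity
  set r : Fin n → ℝ := Y - X.mulVec δ with hrdef
  have hQdef : Q = Xᵀ * X + c • (1 : Matrix (Fin p) (Fin p) ℝ) := rfl
  have hK' : K = 1 - X * Q⁻¹ * Xᵀ := hK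
  -- Q is positive definite hence invertible
  have hQpd : Q.PosDef := by
    rw [hQdef]
    refine Matrix.PosDef.posSemidef_add ?_ ?_
    · have := Matrix.posSemidef_conjTranspose_mul_self X
      rwa [conjTranspose_eq_transpose_of_trivial] at this
    · rw [smul_one_eq_diagonal]
      exact Matrix.PosDef.diagonal fun _ => hcpos
  have hdet : IsUnit Q.det := (Matrix.isUnit_iff_isUnit_det Q).mp hQpd.isUnit
  have hQinv : Q⁻¹ * Q = 1 := nonsing_inv_mul Q hdet
  have hQT : Qᵀ = Q := by
    have := hQpd.isHermitian
    rwa [IsHermitian, conjTranspose_eq_transpose_of_trivial] at this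
  have hQiT : Q⁻¹ᵀ = Q⁻¹ := by rw [transpose_nonsing_inv, hQT]
  have hKT : Kᵀ = K := by
    have := hKpsd.isHermitian
    rwa [IsHermitian, conjTranspose_eq_transpose_of_trivial] at this
  -- key matrix identity
  have key : Kᵀ * K + c • ((Q⁻¹ * Xᵀ)ᵀ * (Q⁻¹ * Xᵀ)) = K := by
    have h1 : (Q⁻¹ * Xᵀ)ᵀ = X * Q⁻¹ := by
      rw [transpose_mul, transpose_transpose, hQiT]
    have e1 : Xᵀ * X = Q - c • (1 : Matrix (Fin p) (Fin p) ℝ) := by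
      rw [hQdef]; abel
    have e2 : (X * Q⁻¹ * Xᵀ) * (X * Q⁻¹ * Xᵀ)
        = X * Q⁻¹ * Xᵀ - c • (X * Q⁻¹ * (Q⁻¹ * Xᵀ)) := by
      have h3 : (X * Q⁻¹ * Xᵀ) * (X * Q⁻¹ * Xᵀ)
          = X * Q⁻¹ * ((Xᵀ * X) * (Q⁻¹ * Xᵀ)) := by
        simp only [Matrix.mul_assoc]
      rw [h3, e1, Matrix.sub_mul, Matrix.smul_mul, Matrix.one_mul, Matrix.mul_sub,
        Matrix.mul_smul]
      congr 1
      rw [← Matrix.mul_assoc, ← Matrix.mul_assoc, Matrix.mul_assoc (X * Q⁻¹) Q Q⁻¹,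
        Matrix.mul_assoc X Q⁻¹ (Q * Q⁻¹), mul_nonsing_inv Q hdet, Matrix.mul_one]
    rw [hKT, h1, hK']
    simp only [Matrix.sub_mul, Matrix.mul_sub, Matrix.one_mul, Matrix.mul_one, e2]
    abel
  -- vector identities
  have hbeta : βhat = (Q⁻¹ * Xᵀ).mulVec r := by
    rw [← mulVec_mulVec]
  have hres : r - X.mulVec βhat = K.mulVec r := by
    rw [hK', sub_mulVec, one_mulVec, hbeta, mulVec_mulVec, ← Matrix.mul_assoc]
  have hsum1 : ∀ v : Fin n → ℝ, (∑ i, (v i)^2) = v ⬝ᵥ v := by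
    intro v; simp [dotProduct, sq]
  have hsum2 : ∀ v : Fin p → ℝ, (∑ i, (v i)^2) = v ⬝ᵥ v := by
    intro v; simp [dotProduct, sq]
  have hleft : ∀ i, Y i - X.mulVec (βhat + δ) i = (r - X.mulVec βhat) i := by
    intro i
    simp [hrdef, mulVec_add]
    ring
  calc (∑ i, (Y i - X.mulVec (βhat + δ) i)^2) + c * (∑ j, (βhat j)^2)
      = (∑ i, ((r - X.mulVec βhat) i)^2) + c * (∑ j, (βhat j)^2) := by
        simp only [hleft]
    _ = (K.mulVec r) ⬝ᵥ (K.mulVec r) + c * (βhat ⬝ᵥ βhat) := by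
        rw [hsum1, hsum2, hres]
    _ = r ⬝ᵥ (Kᵀ * K).mulVec r + c * (r ⬝ᵥ ((Q⁻¹ * Xᵀ)ᵀ * (Q⁻¹ * Xᵀ)).mulVec r) := by
        rw [quad_form_eq, hbeta, quad_form_eq]
    _ = r ⬝ᵥ (Kᵀ * K + c • ((Q⁻¹ * Xᵀ)ᵀ * (Q⁻¹ * Xᵀ))).mulVec r := by
        rw [add_mulVec, dotProduct_add, smul_mulVec, dotProduct_smul, smul_eq_mul]
    _ = r ⬝ᵥ K.mulVec r := by rw [key]
    _ = ∑ i, (hKpsd.sqrt.mulVec r i)^2 := by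
        rw [hsum1, quad_form_eq]
        congr 2
        have hsT : hKpsd.sqrtᵀ = hKpsd.sqrt := by
          rw [← conjTranspose_eq_transpose_of_trivial]
          unfold Matrix.PosSemidef.sqrt
          simp [star_eq_conjTranspose, conjTranspose_eq_transpose_of_trivial, Matrix.mul_assoc]
        have hsq : hKpsd.sqrt * hKpsd.sqrt = K := by
          unfold Matrix.PosSemidef.sqrt
          have hU := Unitary.coe_star_mul_self hKpsd.1.eigenvectorUnitary
          conv_rhs => rw [hKpsd.1.spectral_theorem, Unitary.conjStarAlgAut_apply]
          simp only [Matrix.mul_assoc]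
          rw [← Matrix.mul_assoc (star _) _ (diagonal _ * _), hU, Matrix.one_mul, ← Matrix.mul_assoc (diagonal _) (diagonal _), diagonal_mul_diagonal]
          congr 3
          funext i
          simp [Real.mul_self_sqrt (hKpsd.eigenvalues_nonneg i)]
        rw [hsT, hsq]
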